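/- arXiv:2505.06180 — 6 statements merged into one kernel-verified Lean document; each statement's English description precedes it below -/
import Mathlib

section
/- Let T : A → A be mean nonexpansive with fixed point p, and define the iteration x_{n+1} = (1 − αₙ)xₙ + αₙ T( (rₙ/(rₙ+1))xₙ + (1/(rₙ+1))Txₙ ) with αₙ ∈ [0,1] and rₙ ≥ 0. Then d(x_{n+1}, p) ≤ d(xₙ, p) for all n; in particular {xₙ} is Fejér monotone with respect to F(T) and limₙ d(xₙ, p) exists. -/
private lemma combo_sub {X : Type*} [NormedAddCommGroup X] [NormedSpace ℝ X]
    (c₁ c₂ : ℝ) (h : c₁ + c₂ = 1) (u v w : X) :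
    (c₁ • u + c₂ • v) - w = c₁ • (u - w) + c₂ • (v - w) := by
  have h' : (c₁ • u + c₂ • v) - w = c₁ • u + c₂ • v - (c₁ + c₂) • w := by
    rw [h, one_smul]
  rw [h', add_smul, smul_sub, smul_sub]
  abel

theorem mean_value_mann_fejer_monotone
    {X : Type*} [NormedAddCommGroup X] [NormedSpace ℝ X]
    (A : Set X) (hA : A.Nonempty) (hAc : IsClosed A) (hAconv : Convex ℝ A)
    (T : X → X) (hmaps : Set.MapsTo T A A)
    (a b : ℝ) (ha : 0 ≤ a) (hb : 0 ≤ b) (hab : a + b ≤ 1)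
    (hT : ∀ x ∈ A, ∀ y ∈ A, ‖T x - T y‖ ≤ a * ‖x - y‖ + b * ‖x - T y‖)
    (p : X) (hpA : p ∈ A) (hp : T p = p)
    (α : ℕ → ℝ) (hα : ∀ n, α n ∈ Set.Icc (0 : ℝ) 1)
    (r : ℕ → ℝ) (hr : ∀ n, 0 ≤ r n)
    (x : ℕ → X) (hx0 : x 0 ∈ A)
    (hiter : ∀ n, x (n + 1) =
      (1 - α n) • x n + α n • T ((r n / (r n + 1)) • x n + (1 / (r n + 1)) • T (x n))) :
    (∀ n, ‖x (n + 1) - p‖ ≤ ‖x n - p‖) ∧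
    (∀ q ∈ A, T q = q → ∀ n, ‖x (n + 1) - q‖ ≤ ‖x n - q‖) ∧
    ∃ l : ℝ, Filter.Tendsto (fun n => ‖x n - p‖) Filter.atTop (nhds l) := by
  -- quasi-nonexpansiveness at fixed points
  have quasi : ∀ q ∈ A, T q = q → ∀ z ∈ A, ‖T z - q‖ ≤ ‖z - q‖ := by
    intro q hqA hq z hz
    calc ‖T z - q‖ = ‖T z - T q‖ := by rw [hq]
    _ ≤ a * ‖z - q‖ + b * ‖z - T q‖ := hT z hz q hqA
    _ = (a + b) * ‖z - q‖ := by rw [hq]; ring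
    _ ≤ 1 * ‖z - q‖ := by
        apply mul_le_mul_of_nonneg_right hab (norm_nonneg _)
    _ = ‖z - q‖ := one_mul _
  have hrpos : ∀ n, (0:ℝ) < r n + 1 := fun n => by linarith [hr n]
  have hsum : ∀ n, r n / (r n + 1) + 1 / (r n + 1) = 1 := by
    intro n
    rw [← add_div, div_self (hrpos n).ne']
  have hyA : ∀ n, x n ∈ A →
      (r n / (r n + 1)) • x n + (1 / (r n + 1)) • T (x n) ∈ A := by
    intro n hxn
    exact hAconv hxn (hmaps hxn)
      (div_nonneg (hr n) (hrpos n).le) (div_nonneg zero_le_one (hrpos n).le)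
      (hsum n)
  have hmem : ∀ n, x n ∈ A := by
    intro n
    induction n with
    | zero => exact hx0
    | succ n ih =>
      rw [hiter n]
      exact hAconv ih (hmaps (hyA n ih))
        (by linarith [(hα n).2]) (hα n).1 (by ring)
  have step : ∀ q ∈ A, T q = q → ∀ n, ‖x (n + 1) - q‖ ≤ ‖x n - q‖ := by
    intro q hqA hq n
    set y := (r n / (r n + 1)) • x n + (1 / (r n + 1)) • T (x n) with hy
    have hyq : ‖y - q‖ ≤ ‖x n - q‖ := by
      have h1 : y - q = (r n / (r n + 1)) • (x n - q) + (1 / (r n + 1)) • (T (x n) - q) :=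
        combo_sub _ _ (hsum n) _ _ _
      calc ‖y - q‖ = ‖(r n / (r n + 1)) • (x n - q) + (1 / (r n + 1)) • (T (x n) - q)‖ := by
            rw [h1]
      _ ≤ ‖(r n / (r n + 1)) • (x n - q)‖ + ‖(1 / (r n + 1)) • (T (x n) - q)‖ := norm_add_le _ _
      _ = (r n / (r n + 1)) * ‖x n - q‖ + (1 / (r n + 1)) * ‖T (x n) - q‖ := by
            rw [norm_smul, norm_smul, Real.norm_of_nonneg (div_nonneg (hr n) (hrpos n).le),
              Real.norm_of_nonneg (div_nonneg zero_le_one (hrpos n).le)]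
      _ ≤ (r n / (r n + 1)) * ‖x n - q‖ + (1 / (r n + 1)) * ‖x n - q‖ := by
            gcongr
            · exact div_nonneg zero_le_one (hrpos n).le
            · exact quasi q hqA hq (x n) (hmem n)
      _ = ‖x n - q‖ := by rw [← add_mul, hsum n, one_mul]
    have hTy : ‖T y - q‖ ≤ ‖x n - q‖ :=
      le_trans (quasi q hqA hq y (hyA n (hmem n))) hyq
    have h2 : x (n + 1) - q = (1 - α n) • (x n - q) + α n • (T y - q) := by
      rw [hiter n, ← hy]
      exact combo_sub _ _ (by ring) _ _ _
    calc ‖x (n + 1) - q‖ = ‖(1 - α n) • (x n - q) + α n • (T y - q)‖ := by rw [h2]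
    _ ≤ ‖(1 - α n) • (x n - q)‖ + ‖α n • (T y - q)‖ := norm_add_le _ _
    _ = (1 - α n) * ‖x n - q‖ + α n * ‖T y - q‖ := by
          rw [norm_smul, norm_smul, Real.norm_of_nonneg (by linarith [(hα n).2]),
            Real.norm_of_nonneg (hα n).1]
    _ ≤ (1 - α n) * ‖x n - q‖ + α n * ‖x n - q‖ := by gcongr; exact (hα n).1
    _ = ‖x n - q‖ := by ring
  refine ⟨step p hpA hp, step, ?_⟩
  have hanti : Antitone (fun n => ‖x n - p‖) :=
    antitone_nat_of_succ_le (step p hpA hp)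
  exact ⟨_, tendsto_atTop_ciInf hanti ⟨0, fun v ⟨n, hn⟩ => hn ▸ norm_nonneg _⟩⟩
end

section
/- Let {xₙ} be the mean-value Mann iteration for a mean nonexpansive mapping T with F(T) ≠ ∅ and b < 1, on a closed convex subset of a complete uniformly convex hyperbolic space. Then {xₙ} converges strongly to a fixed point of T if and only if liminfₙ d(xₙ, F(T)) = 0. -/
open Filter Metric

theorem mean_value_mann_strong_convergence_iff
    {X : Type*} [NormedAddCommGroup X] [NormedSpace ℝ X] [UniformConvexSpace X]
    [CompleteSpace X]
    (A : Set X) (hA : A.Nonempty) (hAc : IsClosed A) (hAconv : Convex ℝ A)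
    (T : X → X) (hmaps : Set.MapsTo T A A)
    (a b : ℝ) (ha : 0 ≤ a) (hb : 0 ≤ b) (hab : a + b ≤ 1) (hb1 : b < 1)
    (hT : ∀ x ∈ A, ∀ y ∈ A, ‖T x - T y‖ ≤ a * ‖x - y‖ + b * ‖x - T y‖)
    (hF : ∃ p ∈ A, T p = p)
    (α : ℕ → ℝ) (hα : ∀ n, α n ∈ Set.Icc (0 : ℝ) 1)
    (r : ℕ → ℝ) (hr : ∀ n, 0 ≤ r n)
    (x : ℕ → X) (hx0 : x 0 ∈ A)
    (hiter : ∀ n, x (n + 1) =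
      (1 - α n) • x n + α n • T ((r n / (r n + 1)) • x n + (1 / (r n + 1)) • T (x n))) :
    (∃ q, q ∈ A ∧ T q = q ∧ Filter.Tendsto x Filter.atTop (nhds q)) ↔
      Filter.liminf (fun n => Metric.infDist (x n) {q | q ∈ A ∧ T q = q})
        Filter.atTop = 0 := by
  set F : Set X := {q | q ∈ A ∧ T q = q} with hFdef
  obtain ⟨p₀, hp₀A, hp₀⟩ := hF
  have hFne : F.Nonempty := ⟨p₀, hp₀A, hp₀⟩
  -- T contracts towards fixed points
  have hcontr : ∀ y ∈ A, ∀ p ∈ F, ‖T y - p‖ ≤ ‖y - p‖ := by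
    rintro y hy p ⟨hpA, hp⟩
    have h := hT y hy p hpA
    rw [hp] at h
    nlinarith [norm_nonneg (y - p)]
  -- all iterates lie in A
  have hxA : ∀ n, x n ∈ A := by
    intro n
    induction n with
    | zero => exact hx0
    | succ n ih =>
      have hr1 : 0 < r n + 1 := by linarith [hr n]
      have hy : (r n / (r n + 1)) • x n + (1 / (r n + 1)) • T (x n) ∈ A := by
        apply hAconv ih (hmaps ih) (div_nonneg (hr n) hr1.le) (by positivity)
        field_simp
      rw [hiter n]
      exact hAconv ih (hmaps hy) (by linarith [(hα n).2]) (hα n).1 (by ring)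
  -- Fejér monotonicity
  have hdec : ∀ p ∈ F, ∀ n, ‖x (n + 1) - p‖ ≤ ‖x n - p‖ := by
    rintro p hp n
    have hr1 : 0 < r n + 1 := by linarith [hr n]
    set y := (r n / (r n + 1)) • x n + (1 / (r n + 1)) • T (x n) with hy
    have hyA : y ∈ A :=
      hAconv (hxA n) (hmaps (hxA n)) (div_nonneg (hr n) hr1.le) (by positivity) (by field_simp)
    have hTy : ‖T y - p‖ ≤ ‖x n - p‖ := by
      have h1 : ‖T y - p‖ ≤ ‖y - p‖ := hcontr y hyA p hp
      have hTx : ‖T (x n) - p‖ ≤ ‖x n - p‖ := hcontr (x n) (hxA n) p hp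
      have hd : y - p = (r n / (r n + 1)) • (x n - p) + (1 / (r n + 1)) • (T (x n) - p) := by
        rw [hy]
        match_scalars <;> (field_simp; try ring)
      have h2 : ‖y - p‖ ≤ ‖x n - p‖ := by
        calc ‖y - p‖ ≤ (r n / (r n + 1)) * ‖x n - p‖ + (1 / (r n + 1)) * ‖T (x n) - p‖ := by
              rw [hd]
              refine (norm_add_le _ _).trans ?_
              rw [norm_smul, norm_smul, Real.norm_of_nonneg (div_nonneg (hr n) hr1.le),
                Real.norm_of_nonneg (by positivity)]
          _ ≤ (r n / (r n + 1)) * ‖x n - p‖ + (1 / (r n + 1)) * ‖x n - p‖ := by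
              gcongr
          _ = ‖x n - p‖ := by field_simp
      linarith
    have hd2 : x (n + 1) - p = (1 - α n) • (x n - p) + α n • (T y - p) := by
      rw [hiter n, ← hy]; module
    calc ‖x (n + 1) - p‖ ≤ (1 - α n) * ‖x n - p‖ + α n * ‖T y - p‖ := by
          rw [hd2]
          refine (norm_add_le _ _).trans ?_
          rw [norm_smul, norm_smul, Real.norm_of_nonneg (by linarith [(hα n).2]),
            Real.norm_of_nonneg (hα n).1]
      _ ≤ (1 - α n) * ‖x n - p‖ + α n * ‖x n - p‖ := by
          nlinarith [(hα n).1]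
      _ = ‖x n - p‖ := by ring
  have hmono : ∀ p ∈ F, ∀ m n : ℕ, m ≤ n → ‖x n - p‖ ≤ ‖x m - p‖ := by
    intro p hp
    have : Antitone fun n => ‖x n - p‖ := antitone_nat_of_succ_le fun n => hdec p hp n
    intro m n h
    exact this h
  have hinf_anti : Antitone fun n => Metric.infDist (x n) F := by
    apply antitone_nat_of_succ_le
    intro n
    by_contra hcon
    push_neg at hcon
    obtain ⟨p, hp, hlt⟩ := (Metric.infDist_lt_iff hFne).1 hcon
    have h1 : Metric.infDist (x (n + 1)) F ≤ dist (x (n + 1)) p :=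
      Metric.infDist_le_dist_of_mem hp
    have h2 : dist (x (n + 1)) p ≤ dist (x n) p := by
      simpa [dist_eq_norm] using hdec p hp n
    linarith
  have hFc : IsClosed F := by
    rw [← isSeqClosed_iff_isClosed]
    intro u q hu hq
    have hqA : q ∈ A := hAc.isSeqClosed (fun n => (hu n).1) hq
    refine ⟨hqA, ?_⟩
    have hkey : ∀ n, ‖u n - T q‖ ≤ ‖u n - q‖ := by
      intro n
      have h := hcontr q hqA (u n) (hu n)
      rw [norm_sub_rev (u n), norm_sub_rev (u n) q]
      exact h
    have hq0 : Tendsto (fun n => ‖u n - q‖) atTop (nhds 0) := by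
      simpa [dist_eq_norm] using (tendsto_iff_dist_tendsto_zero.1 hq)
    have hT0 : Tendsto (fun n => ‖u n - T q‖) atTop (nhds 0) :=
      squeeze_zero (fun n => norm_nonneg _) hkey hq0
    have hTlim : Tendsto u atTop (nhds (T q)) := by
      rw [tendsto_iff_norm_sub_tendsto_zero]
      exact hT0
    exact tendsto_nhds_unique hTlim hq
  constructor
  · rintro ⟨q, hqA, hq, hconv⟩
    have hqF : q ∈ F := ⟨hqA, hq⟩
    have h0 : Tendsto (fun n => Metric.infDist (x n) F) atTop (nhds 0) :=
      squeeze_zero (fun n => Metric.infDist_nonneg)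
        (fun n => Metric.infDist_le_dist_of_mem hqF)
        (tendsto_iff_dist_tendsto_zero.1 hconv)
    exact h0.liminf_eq
  · intro hlim
    have hbdd : BddBelow (Set.range fun n => Metric.infDist (x n) F) :=
      ⟨0, by rintro _ ⟨n, rfl⟩; exact Metric.infDist_nonneg⟩
    have htend : Tendsto (fun n => Metric.infDist (x n) F) atTop
        (nhds (⨅ n, Metric.infDist (x n) F)) :=
      tendsto_atTop_ciInf hinf_anti hbdd
    have hinf0 : (⨅ n, Metric.infDist (x n) F) = 0 := by
      rw [← htend.liminf_eq]; exact hlim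
    have h0 : Tendsto (fun n => Metric.infDist (x n) F) atTop (nhds 0) := hinf0 ▸ htend
    have hcauchy : CauchySeq x := by
      rw [Metric.cauchySeq_iff]
      intro ε hε
      obtain ⟨N, hN⟩ := (Metric.tendsto_atTop.1 h0) (ε / 3) (by linarith)
      have hNlt : Metric.infDist (x N) F < ε / 3 := by
        have := hN N le_rfl
        rw [Real.dist_eq, abs_sub_comm, abs_of_nonpos (by linarith [Metric.infDist_nonneg (x := x N) (s := F)])] at this
        linarith
      obtain ⟨p, hpF, hplt⟩ := (Metric.infDist_lt_iff hFne).1 hNlt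
      refine ⟨N, fun m hm n hn => ?_⟩
      have h1 : dist (x m) p ≤ dist (x N) p := by
        simpa [dist_eq_norm] using hmono p hpF N m hm
      have h2 : dist (x n) p ≤ dist (x N) p := by
        simpa [dist_eq_norm] using hmono p hpF N n hn
      calc dist (x m) (x n) ≤ dist (x m) p + dist p (x n) := dist_triangle _ _ _
        _ = dist (x m) p + dist (x n) p := by rw [dist_comm p]
        _ ≤ dist (x N) p + dist (x N) p := by linarith
        _ < ε := by linarith
    obtain ⟨q, hq⟩ := cauchySeq_tendsto_of_complete hcauchy
    have hqinf : Metric.infDist q F = 0 := by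
      have hcont : Tendsto (fun n => Metric.infDist (x n) F) atTop
          (nhds (Metric.infDist q F)) :=
        ((Metric.continuous_infDist_pt F).tendsto q).comp hq
      exact tendsto_nhds_unique hcont h0
    have hqF : q ∈ F := ((hFc.mem_iff_infDist_zero hFne).2 hqinf)
    exact ⟨q, hqF.1, hqF.2, hq⟩
end

section
/- If a sequence {xₙ} in a complete metric space is Fejér monotone with respect to a nonempty closed set F and liminfₙ d(xₙ, F) = 0, then {xₙ} is a Cauchy sequence and its limit belongs to F. -/
theorem fejer_monotone_liminf_zero_convergence
    {S : Type*} [MetricSpace S] [CompleteSpace S]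
    (F : Set S) (hF : F.Nonempty) (hFc : IsClosed F)
    (x : ℕ → S)
    (hfejer : ∀ q ∈ F, ∀ n : ℕ, dist (x (n + 1)) q ≤ dist (x n) q)
    (hliminf : Filter.liminf (fun n => Metric.infDist (x n) F) Filter.atTop = 0) :
    CauchySeq x ∧ ∃ q ∈ F, Filter.Tendsto x Filter.atTop (nhds q) := by
  -- monotonicity of dist to a fixed q over indices
  have hmono : ∀ q ∈ F, ∀ {m n : ℕ}, m ≤ n → dist (x n) q ≤ dist (x m) q := by
    intro q hq m n hmn
    induction n with
    | zero => simp [Nat.le_zero.mp hmn]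
    | succ k ih =>
      rcases Nat.lt_or_ge m (k+1) with h | h
      · exact le_trans (hfejer q hq k) (ih (Nat.lt_succ_iff.mp h))
      · have : m = k + 1 := le_antisymm hmn h
        simp [this]
  -- infDist is antitone
  have hanti : Antitone (fun n => Metric.infDist (x n) F) := by
    intro m n hmn
    simp only [Metric.infDist_eq_iInf]
    exact ciInf_mono ⟨0, by rintro r ⟨q, rfl⟩; exact dist_nonneg⟩
      fun q => hmono q q.2 hmn
  have hbdd : BddBelow (Set.range fun n => Metric.infDist (x n) F) := by
    refine ⟨0, ?_⟩
    rintro r ⟨n, rfl⟩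
    exact Metric.infDist_nonneg
  have htend : Filter.Tendsto (fun n => Metric.infDist (x n) F) Filter.atTop
      (nhds (⨅ n, Metric.infDist (x n) F)) :=
    tendsto_atTop_ciInf hanti hbdd
  have hinf0 : (⨅ n, Metric.infDist (x n) F) = 0 := by
    rw [← hliminf]; exact (htend.liminf_eq).symm
  have htend0 : Filter.Tendsto (fun n => Metric.infDist (x n) F) Filter.atTop (nhds 0) := by
    rwa [hinf0] at htend
  have hcauchy : CauchySeq x := by
    rw [Metric.cauchySeq_iff]
    intro ε hε
    have : ∀ᶠ n in Filter.atTop, Metric.infDist (x n) F < ε / 4 := by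
      have := htend0.eventually (gt_mem_nhds (by linarith : (0:ℝ) < ε / 4))
      exact this
    rcases this.exists with ⟨N, hN⟩
    rcases (Metric.infDist_lt_iff hF).mp hN with ⟨q, hq, hqd⟩
    refine ⟨N, fun m hm n hn => ?_⟩
    have h1 : dist (x m) q ≤ dist (x N) q := hmono q hq hm
    have h2 : dist (x n) q ≤ dist (x N) q := hmono q hq hn
    calc dist (x m) (x n) ≤ dist (x m) q + dist (x n) q := dist_triangle_right _ _ _
      _ < ε := by linarith
  rcases cauchySeq_tendsto_of_complete hcauchy with ⟨l, hl⟩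
  refine ⟨hcauchy, l, ?_, hl⟩
  have hcont : Filter.Tendsto (fun n => Metric.infDist (x n) F) Filter.atTop
      (nhds (Metric.infDist l F)) :=
    ((Metric.continuous_infDist_pt F).continuousAt.tendsto.comp hl)
  have : Metric.infDist l F = 0 := tendsto_nhds_unique hcont htend0
  exact (IsClosed.mem_iff_infDist_zero hFc hF).mpr this
end

section
/- Let A be a nonempty closed convex subset of a real Hilbert space and T : A → A mean nonexpansive with constants a, b, a + b ≤ 1, b < 1. Then the fixed point set F(T) is convex. -/
theorem mean_nonexpansive_fixed_point_set_convex
    {H : Type*} [NormedAddCommGroup H] [InnerProductSpace ℝ H] [CompleteSpace H]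
    (A : Set H) (hA : A.Nonempty) (hAc : IsClosed A) (hAconv : Convex ℝ A)
    (T : H → H) (hmaps : Set.MapsTo T A A)
    (a b : ℝ) (ha : 0 ≤ a) (hb : 0 ≤ b) (hab : a + b ≤ 1) (hb1 : b < 1)
    (hT : ∀ x ∈ A, ∀ y ∈ A, ‖T x - T y‖ ≤ a * ‖x - y‖ + b * ‖x - T y‖) :
    Convex ℝ {x | x ∈ A ∧ T x = x} := by
  intro x hx y hy s t hs ht hst
  obtain ⟨hxA, hxF⟩ := hx
  obtain ⟨hyA, hyF⟩ := hy
  set z : H := s • x + t • y with hzdef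
  have hzA : z ∈ A := hAconv hxA hyA hs ht hst
  set u : H := T z with hudef
  -- For any fixed point p, ‖u - p‖ ≤ ‖z - p‖
  have key : ∀ p ∈ A, T p = p → ‖u - p‖ ≤ ‖z - p‖ := by
    intro p hpA hpF
    have := hT z hzA p hpA
    rw [hpF] at this
    have hn : 0 ≤ ‖z - p‖ := norm_nonneg _
    nlinarith [this]
  have hd : x - y = (u - y) - (u - x) := by abel
  have h1 : ‖u - x‖ ≤ t * ‖x - y‖ := by
    have := key x hxA hxF
    have hzx : z - x = t • (y - x) := by
      rw [hzdef]
      have : s = 1 - t := by linarith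
      rw [this]; module
    rw [hzx, norm_smul, Real.norm_eq_abs, abs_of_nonneg ht, norm_sub_rev y x] at this
    exact this
  have h2 : ‖u - y‖ ≤ s * ‖x - y‖ := by
    have := key y hyA hyF
    have hzy : z - y = s • (x - y) := by
      rw [hzdef]
      have : t = 1 - s := by linarith
      rw [this]; module
    rw [hzy, norm_smul, Real.norm_eq_abs, abs_of_nonneg hs] at this
    exact this
  have huz : u - z = s • (u - x) + t • (u - y) := by
    rw [hzdef]
    have : s = 1 - t := by linarith
    rw [this]; module
  have hexp : ‖u - z‖ ^ 2 = s ^ 2 * ‖u - x‖ ^ 2 + 2 * (s * t) * inner ℝ (u - x) (u - y)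
      + t ^ 2 * ‖u - y‖ ^ 2 := by
    rw [huz, @norm_add_sq_real, real_inner_smul_left, real_inner_smul_right,
      norm_smul, norm_smul, Real.norm_eq_abs, Real.norm_eq_abs, abs_of_nonneg hs,
      abs_of_nonneg ht]
    ring
  have hdsq : ‖x - y‖ ^ 2 = ‖u - y‖ ^ 2 - 2 * inner ℝ (u - x) (u - y) + ‖u - x‖ ^ 2 := by
    rw [hd, @norm_sub_sq_real, real_inner_comm]
  have hp2 : ‖u - x‖ ^ 2 ≤ (t * ‖x - y‖) ^ 2 := pow_le_pow_left₀ (norm_nonneg _) h1 2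
  have hq2 : ‖u - y‖ ^ 2 ≤ (s * ‖x - y‖) ^ 2 := pow_le_pow_left₀ (norm_nonneg _) h2 2
  have hid : ‖u - z‖ ^ 2 = s * ‖u - x‖ ^ 2 + t * ‖u - y‖ ^ 2 - s * t * ‖x - y‖ ^ 2 := by
    rw [hexp, hdsq]
    have hs' : s = 1 - t := by linarith
    rw [hs']; ring
  have e1 : s * ‖u - x‖ ^ 2 ≤ s * (t * ‖x - y‖) ^ 2 := mul_le_mul_of_nonneg_left hp2 hs
  have e2 : t * ‖u - y‖ ^ 2 ≤ t * (s * ‖x - y‖) ^ 2 := mul_le_mul_of_nonneg_left hq2 ht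
  have e3 : s * (t * ‖x - y‖) ^ 2 + t * (s * ‖x - y‖) ^ 2 = s * t * ‖x - y‖ ^ 2 := by
    have ht' : t = 1 - s := by linarith
    rw [ht']; ring
  have hle : ‖u - z‖ ^ 2 ≤ 0 := by rw [hid]; linarith
  have huz0 : u = z := by
    have h0 : ‖u - z‖ = 0 := le_antisymm (by nlinarith [norm_nonneg (u - z)]) (norm_nonneg _)
    exact norm_sub_eq_zero_iff.mp h0
  exact ⟨hzA, huz0⟩
end

section
/- Let {xₙ} be the mean-value Mann iteration for a mean nonexpansive mapping T with fixed point p. If limₙ d(xₙ, p) = c > 0 and limₙ d(x_{n+1}, p) = c, and ωₙ = (rₙ/(rₙ+1))xₙ + (1/(rₙ+1))Txₙ, then limₙ d(Tωₙ, p) = c and limₙ d(ωₙ, p) = c. -/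
theorem mean_value_mann_omega_norm_limits
    {X : Type*} [NormedAddCommGroup X] [NormedSpace ℝ X] [UniformConvexSpace X]
    (A : Set X) (hA : A.Nonempty) (hAc : IsClosed A) (hAconv : Convex ℝ A)
    (T : X → X) (hmaps : Set.MapsTo T A A)
    (a b : ℝ) (ha : 0 ≤ a) (hb : 0 ≤ b) (hab : a + b ≤ 1)
    (hT : ∀ x ∈ A, ∀ y ∈ A, ‖T x - T y‖ ≤ a * ‖x - y‖ + b * ‖x - T y‖)
    (p : X) (hpA : p ∈ A) (hp : T p = p)
    (ε : ℝ) (hε : ε ∈ Set.Ioo (0 : ℝ) (1 / 2))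
    (α : ℕ → ℝ) (hα : ∀ n, α n ∈ Set.Icc ε (1 - ε))
    (r : ℕ → ℝ) (hr : ∀ n, 0 ≤ r n)
    (x ω : ℕ → X) (hx0 : x 0 ∈ A)
    (hω : ∀ n, ω n = (r n / (r n + 1)) • x n + (1 / (r n + 1)) • T (x n))
    (hiter : ∀ n, x (n + 1) = (1 - α n) • x n + α n • T (ω n))
    (c : ℝ) (hc : 0 < c)
    (hlim : Filter.Tendsto (fun n => ‖x n - p‖) Filter.atTop (nhds c))
    (hlim' : Filter.Tendsto (fun n => ‖x (n + 1) - p‖) Filter.atTop (nhds c)) :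
    Filter.Tendsto (fun n => ‖T (ω n) - p‖) Filter.atTop (nhds c) ∧
    Filter.Tendsto (fun n => ‖ω n - p‖) Filter.atTop (nhds c) := by
  obtain ⟨hε0, hε2⟩ := hε
  -- T is quasi-nonexpansive at p
  have hTq : ∀ y ∈ A, ‖T y - p‖ ≤ ‖y - p‖ := by
    intro y hy
    have := hT y hy p hpA
    rw [hp] at this
    nlinarith [norm_nonneg (y - p)]
  -- membership
  have hrpos : ∀ n, (0:ℝ) < r n + 1 := fun n => by linarith [hr n]
  have hωA : ∀ n, x n ∈ A → ω n ∈ A := by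
    intro n hxn
    rw [hω n]
    apply hAconv hxn (hmaps hxn)
    · exact div_nonneg (hr n) (hrpos n).le
    · exact div_nonneg one_pos.le (hrpos n).le
    · rw [← add_div, div_self (hrpos n).ne']
  have hxA : ∀ n, x n ∈ A := by
    intro n
    induction n with
    | zero => exact hx0
    | succ k ih =>
      rw [hiter k]
      have hαk := hα k
      apply hAconv ih (hmaps (hωA k ih))
      · linarith [hαk.2]
      · linarith [hαk.1]
      · ring
  -- ‖ω n - p‖ ≤ ‖x n - p‖
  have hωle : ∀ n, ‖ω n - p‖ ≤ ‖x n - p‖ := by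
    intro n
    have key : ω n - p = (r n / (r n + 1)) • (x n - p) + (1 / (r n + 1)) • (T (x n) - p) := by
      have hsum : (r n / (r n + 1)) + (1 / (r n + 1)) = 1 := by
        rw [← add_div, div_self (hrpos n).ne']
      have hps : (r n / (r n + 1)) • (p:X) + (1 / (r n + 1)) • (p:X) = p := by
        rw [← add_smul, hsum, one_smul]
      calc ω n - p = ((r n / (r n + 1)) • x n + (1 / (r n + 1)) • T (x n))
            - ((r n / (r n + 1)) • (p:X) + (1 / (r n + 1)) • (p:X)) := by rw [hω n, hps]
        _ = _ := by rw [smul_sub, smul_sub]; abel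
    calc ‖ω n - p‖ ≤ (r n / (r n + 1)) * ‖x n - p‖ + (1 / (r n + 1)) * ‖T (x n) - p‖ := by
          rw [key]
          refine (norm_add_le _ _).trans ?_
          rw [norm_smul, norm_smul, Real.norm_eq_abs, Real.norm_eq_abs,
            abs_of_nonneg (div_nonneg (hr n) (hrpos n).le),
            abs_of_nonneg (div_nonneg one_pos.le (hrpos n).le)]
      _ ≤ (r n / (r n + 1)) * ‖x n - p‖ + (1 / (r n + 1)) * ‖x n - p‖ := by
          have := hTq (x n) (hxA n)
          have h1 : (0:ℝ) ≤ 1 / (r n + 1) := div_nonneg one_pos.le (hrpos n).le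
          nlinarith
      _ = ‖x n - p‖ := by
          field_simp
          rw [div_eq_iff (hrpos n).ne']
          ring
  -- ‖T ω n - p‖ ≤ ‖ω n - p‖ ≤ ‖x n - p‖
  have hTωle : ∀ n, ‖T (ω n) - p‖ ≤ ‖ω n - p‖ := fun n => hTq (ω n) (hωA n (hxA n))
  have hTωle' : ∀ n, ‖T (ω n) - p‖ ≤ ‖x n - p‖ := fun n => (hTωle n).trans (hωle n)
  -- Mann step inequality
  have hstep : ∀ n, ‖x (n+1) - p‖ ≤ (1 - α n) * ‖x n - p‖ + α n * ‖T (ω n) - p‖ := by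
    intro n
    have key : x (n+1) - p = (1 - α n) • (x n - p) + α n • (T (ω n) - p) := by
      have hps : (1 - α n) • (p:X) + α n • (p:X) = p := by
        rw [← add_smul, sub_add_cancel, one_smul]
      calc x (n+1) - p = ((1 - α n) • x n + α n • T (ω n))
            - ((1 - α n) • (p:X) + α n • (p:X)) := by rw [hiter n, hps]
        _ = _ := by rw [smul_sub, smul_sub]; abel
    rw [key]
    refine (norm_add_le _ _).trans ?_
    have hαn := hα n
    rw [norm_smul, norm_smul, Real.norm_eq_abs, Real.norm_eq_abs,
      abs_of_nonneg (by linarith [hαn.2] : (0:ℝ) ≤ 1 - α n),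
      abs_of_nonneg (by linarith [hαn.1] : (0:ℝ) ≤ α n)]
  -- lower bound
  have hlow : ∀ n, ‖x n - p‖ + (‖x (n+1) - p‖ - ‖x n - p‖) / ε ≤ ‖T (ω n) - p‖ := by
    intro n
    have hαn := hα n
    have h1 := hstep n
    have h2 := hTωle' n
    have key : ‖x (n+1) - p‖ - ‖x n - p‖ ≤ ε * (‖T (ω n) - p‖ - ‖x n - p‖) := by
      nlinarith [hαn.1, hαn.2]
    have h3 : (‖x (n+1) - p‖ - ‖x n - p‖) / ε ≤ ‖T (ω n) - p‖ - ‖x n - p‖ := by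
      rw [div_le_iff₀ hε0]
      nlinarith
    linarith
  have hg : Filter.Tendsto (fun n => ‖x n - p‖ + (‖x (n+1) - p‖ - ‖x n - p‖) / ε)
      Filter.atTop (nhds c) := by
    have : Filter.Tendsto (fun n => ‖x n - p‖ + (‖x (n+1) - p‖ - ‖x n - p‖) / ε)
        Filter.atTop (nhds (c + (c - c) / ε)) := by
      exact hlim.add ((hlim'.sub hlim).div_const ε)
    simpa using this
  have hTωlim : Filter.Tendsto (fun n => ‖T (ω n) - p‖) Filter.atTop (nhds c) :=
    tendsto_of_tendsto_of_tendsto_of_le_of_le hg hlim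
      (fun n => hlow n) (fun n => hTωle' n)
  refine ⟨hTωlim, ?_⟩
  exact tendsto_of_tendsto_of_tendsto_of_le_of_le hTωlim hlim
    (fun n => hTωle n) (fun n => hωle n)
end

section
/- Demiclosedness principle: let A be a nonempty closed convex subset of a real Hilbert space and T : A → A mean nonexpansive with b < 1. If {xₙ} ⊆ A converges weakly to z and ‖xₙ − Txₙ‖ → 0, then Tz = z. -/
theorem mean_nonexpansive_demiclosedness
    {H : Type*} [NormedAddCommGroup H] [InnerProductSpace ℝ H] [CompleteSpace H]
    (A : Set H) (hA : A.Nonempty) (hAc : IsClosed A) (hAconv : Convex ℝ A)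
    (T : H → H) (hmaps : Set.MapsTo T A A)
    (a b : ℝ) (ha : 0 ≤ a) (hb : 0 ≤ b) (hab : a + b ≤ 1) (hb1 : b < 1)
    (hT : ∀ x ∈ A, ∀ y ∈ A, ‖T x - T y‖ ≤ a * ‖x - y‖ + b * ‖x - T y‖)
    (x : ℕ → H) (hx : ∀ n, x n ∈ A)
    (z : H)
    (hweak : ∀ y : H, Filter.Tendsto (fun n => inner ℝ (x n) y : ℕ → ℝ)
      Filter.atTop (nhds (inner ℝ z y)))
    (hreg : Filter.Tendsto (fun n => ‖x n - T (x n)‖) Filter.atTop (nhds 0)) :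
    T z = z := by
  have hb1' : (0:ℝ) < 1 - b := by linarith
  -- Step 1: z ∈ A
  have hzA : z ∈ A := by
    by_contra hz
    obtain ⟨f, u, hus, hux⟩ := geometric_hahn_banach_closed_point hAconv hAc hz
    set w := (InnerProductSpace.toDual ℝ H).symm f with hw
    have hfw : ∀ y : H, f y = inner ℝ w y := by
      intro y
      have := InnerProductSpace.toDual_symm_apply (𝕜 := ℝ) (E := H) (y := f) (x := y)
      rw [← hw] at this
      exact this.symm
    have h1 : Filter.Tendsto (fun n => inner ℝ (x n) w : ℕ → ℝ) Filter.atTop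
        (nhds (inner ℝ z w)) := hweak w
    have h2 : inner ℝ z w ≤ u := by
      refine le_of_tendsto h1 (Filter.Eventually.of_forall fun n => ?_)
      have := hus (x n) (hx n)
      rw [hfw (x n), real_inner_comm] at this
      exact this.le
    rw [hfw z, real_inner_comm] at hux
    linarith
  -- Step 2: boundedness of ‖x n - z‖
  obtain ⟨C, hC⟩ : ∃ C, ∀ n, ‖x n - z‖ ≤ C := by
    set g : ℕ → H →L[ℝ] ℝ := fun n =>
      (InnerProductSpace.toDual ℝ H (x n) : H →L[ℝ] ℝ) with hg
    obtain ⟨C', hC'⟩ : ∃ C', ∀ n, ‖g n‖ ≤ C' := by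
      apply banach_steinhaus
      intro y
      have hbd : BddAbove (Set.range fun n => ‖(inner ℝ (x n) y : ℝ)‖) :=
        ((hweak y).norm).bddAbove_range
      obtain ⟨M, hM⟩ := hbd
      exact ⟨M, fun n => hM ⟨n, rfl⟩⟩
    refine ⟨C' + ‖z‖, fun n => ?_⟩
    have : ‖x n‖ = ‖g n‖ := ((InnerProductSpace.toDual ℝ H).norm_map (x n)).symm
    calc ‖x n - z‖ ≤ ‖x n‖ + ‖z‖ := norm_sub_le _ _
      _ ≤ C' + ‖z‖ := by rw [this]; linarith [hC' n]
  have hC0 : 0 ≤ C := le_trans (norm_nonneg _) (hC 0)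
  -- Step 3: key inequality
  set δ : ℕ → ℝ := fun n => ‖x n - T (x n)‖ / (1 - b) with hδ
  have hδ0 : ∀ n, 0 ≤ δ n := fun n => div_nonneg (norm_nonneg _) hb1'.le
  have key : ∀ n, ‖x n - T z‖ ≤ ‖x n - z‖ + δ n := by
    intro n
    have h1 : ‖x n - T z‖ ≤ ‖x n - T (x n)‖ + ‖T (x n) - T z‖ := norm_sub_le_norm_sub_add_norm_sub _ _ _
    have h2 : ‖T (x n) - T z‖ ≤ a * ‖x n - z‖ + b * ‖x n - T z‖ := hT (x n) (hx n) z hzA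
    have h3 : (1 - b) * ‖x n - T z‖ ≤ ‖x n - T (x n)‖ + a * ‖x n - z‖ := by nlinarith
    have h4 : a * ‖x n - z‖ ≤ (1 - b) * ‖x n - z‖ := by
      apply mul_le_mul_of_nonneg_right _ (norm_nonneg _); linarith
    have h5 : (1 - b) * ‖x n - T z‖ ≤ (1 - b) * ‖x n - z‖ + ‖x n - T (x n)‖ := by linarith
    simp only [hδ]
    rw [← mul_le_mul_iff_right₀ hb1']
    have h6 : (1-b) * (‖x n - z‖ + ‖x n - T (x n)‖/(1-b))
        = (1-b)*‖x n - z‖ + ‖x n - T (x n)‖ := by field_simp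
    linarith
  -- expand norms
  have expand : ∀ n, ‖T z - z‖^2 ≤ 2 * inner ℝ (x n - z) (T z - z) + 2 * δ n * C + δ n ^ 2 := by
    intro n
    have e1 : ‖x n - T z‖^2 = ‖x n - z‖^2 - 2 * inner ℝ (x n - z) (T z - z) + ‖T z - z‖^2 := by
      have : x n - T z = (x n - z) - (T z - z) := by abel
      rw [this, @norm_sub_sq_real]
    have e2 : ‖x n - T z‖^2 ≤ (‖x n - z‖ + δ n)^2 := by
      have := key n
      nlinarith [norm_nonneg (x n - T z), norm_nonneg (x n - z), hδ0 n]
    nlinarith [hC n, hδ0 n]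
  -- RHS tends to 0
  have hδlim : Filter.Tendsto δ Filter.atTop (nhds 0) := by
    have := hreg.div_const (1 - b)
    simpa using this
  have hinlim : Filter.Tendsto (fun n => (inner ℝ (x n - z) (T z - z) : ℝ)) Filter.atTop (nhds 0) := by
    have h1 : Filter.Tendsto (fun n => (inner ℝ (x n) (T z - z) - inner ℝ z (T z - z) : ℝ))
        Filter.atTop (nhds (inner ℝ z (T z - z) - inner ℝ z (T z - z))) :=
      (hweak (T z - z)).sub tendsto_const_nhds
    simp only [sub_self] at h1
    convert h1 using 2 with n
    rw [inner_sub_left]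
  have hrhs : Filter.Tendsto (fun n => 2 * inner ℝ (x n - z) (T z - z) + 2 * δ n * C + δ n ^ 2)
      Filter.atTop (nhds 0) := by
    have := ((hinlim.const_mul 2).add (((hδlim.const_mul 2).mul_const C))).add
      (hδlim.pow 2)
    simpa using this
  have hfinal : ‖T z - z‖^2 ≤ 0 :=
    ge_of_tendsto hrhs (Filter.Eventually.of_forall expand)
  have : ‖T z - z‖ = 0 := by nlinarith [norm_nonneg (T z - z)]
  have := norm_eq_zero.mp this
  have : T z = z := by rwa [sub_eq_zero] at this
  exact this
end
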